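/- Let r > 0, κ ∈ [0,1), t ≥ 0, and let ε > 0 be such that γ := κ²(1+ε)/ε < 1. Let x : ℝ → ℝ^d be continuous on [0,t] with initial segment ξ := x_0 satisfying ‖ξ‖_r < ∞, and let h : [0,t] → ℝ^d satisfy |h(s)| ≤ κ‖x_s‖_r for all s ∈ [0,t]. Set Γ(s) := x(s) − h(s). Then e^{2rt}‖x_t‖²_r ≤ (1/(1−γ))‖ξ‖²_r + ((1+ε)/(1−γ)) · sup_{0 < s ≤ t} e^{2rs}|Γ(s)|². -/

import Mathlib

/-- The segment `x_t(θ) = x(t + θ)`. -/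
def seg {d : ℕ} (x : ℝ → EuclideanSpace ℝ (Fin d)) (t : ℝ) :
    ℝ → EuclideanSpace ℝ (Fin d) := fun θ => x (t + θ)

/-- The weighted norm `‖φ‖_r = sup_{θ ≤ 0} e^{rθ} |φ(θ)|` (as a real supremum). -/
noncomputable def rnorm {d : ℕ} (r : ℝ) (φ : ℝ → EuclideanSpace ℝ (Fin d)) : ℝ :=
  sSup ((fun θ => Real.exp (r * θ) * ‖φ θ‖) '' Set.Iic 0)

/-- let `r > 0`, `κ ∈ [0,1)`, `t ≥ 0`, `ε > 0` with `γ := κ²(1+ε)/ε < 1`. Let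
`x` be continuous on `[0,t]` with `‖x_0‖_r < ∞` and let `h` satisfy `|h(s)| ≤ κ‖x_s‖_r` on
`[0,t]`. With `Γ(s) := x(s) − h(s)` one has
`e^{2rt}‖x_t‖²_r ≤ (1/(1−γ))‖x_0‖²_r + ((1+ε)/(1−γ)) sup_{0<s≤t} e^{2rs}|Γ(s)|²`. -/
theorem weighted_norm_neutral_decomposition {d : ℕ} (r κ t ε : ℝ)
    (hr : 0 < r) (hκ0 : 0 ≤ κ) (hκ1 : κ < 1) (ht : 0 ≤ t) (hε : 0 < ε)
    (hγ : κ ^ 2 * (1 + ε) / ε < 1)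
    (x h : ℝ → EuclideanSpace ℝ (Fin d))
    (hx : ContinuousOn x (Set.Icc 0 t))
    (hξ : BddAbove ((fun θ => Real.exp (r * θ) * ‖seg x 0 θ‖) '' Set.Iic 0))
    (hh : ∀ s ∈ Set.Icc (0 : ℝ) t, ‖h s‖ ≤ κ * rnorm r (seg x s)) :
    Real.exp (2 * r * t) * (rnorm r (seg x t)) ^ 2
      ≤ 1 / (1 - κ ^ 2 * (1 + ε) / ε) * (rnorm r (seg x 0)) ^ 2
        + (1 + ε) / (1 - κ ^ 2 * (1 + ε) / ε)
          * sSup ((fun s => Real.exp (2 * r * s) * ‖x s - h s‖ ^ 2) '' Set.Ioc 0 t) := by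
  have hγpos : 0 < 1 - κ ^ 2 * (1 + ε) / ε := by linarith
  have hγnn : 0 ≤ κ ^ 2 * (1 + ε) / ε := by positivity
  set F : ℝ → ℝ := fun u => Real.exp (r * u) * ‖x u‖ with hF
  have hFnn : ∀ u, 0 ≤ F u := fun u => mul_nonneg (Real.exp_pos _).le (norm_nonneg _)
  have hseg0 : (fun θ => Real.exp (r * θ) * ‖seg x 0 θ‖) = F := by
    funext θ; simp [seg, hF]
  have hB0 : BddAbove (F '' Set.Iic 0) := by rwa [hseg0] at hξ
  have hBmid : BddAbove (F '' Set.Icc 0 t) :=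
    isCompact_Icc.bddAbove_image
      ((Real.continuous_exp.comp (continuous_const.mul continuous_id)).continuousOn.mul hx.norm)
  have hIic : Set.Iic t = Set.Iic 0 ∪ Set.Icc 0 t := by
    ext u
    simp only [Set.mem_Iic, Set.mem_union, Set.mem_Icc]
    constructor
    · intro hu
      rcases le_or_gt u 0 with h | h
      · exact Or.inl h
      · exact Or.inr ⟨h.le, hu⟩
    · rintro (h | ⟨-, h⟩)
      · exact h.trans ht
      · exact h
  have hBt : BddAbove (F '' Set.Iic t) := by
    rw [hIic, Set.image_union]; exact hB0.union hBmid
  set N := sSup (F '' Set.Iic t) with hNdef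
  set N0 := sSup (F '' Set.Iic 0) with hN0def
  have hFleN : ∀ u, u ≤ t → F u ≤ N := fun u hu => le_csSup hBt ⟨u, hu, rfl⟩
  have hNnn : 0 ≤ N := (hFnn t).trans (hFleN t le_rfl)
  have hN0nn : 0 ≤ N0 := by
    apply Real.sSup_nonneg
    rintro y ⟨u, -, rfl⟩
    exact hFnn u
  have hrnnn : ∀ s : ℝ, 0 ≤ rnorm r (seg x s) := by
    intro s
    apply Real.sSup_nonneg
    rintro y ⟨θ, -, rfl⟩
    exact mul_nonneg (Real.exp_pos _).le (norm_nonneg _)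
  have hr0 : rnorm r (seg x 0) = N0 := by rw [rnorm, hseg0]
  -- weighted sup bound at time s
  have hrnorm : ∀ s ∈ Set.Icc (0 : ℝ) t, Real.exp (r * s) * rnorm r (seg x s) ≤ N := by
    intro s hs
    have hle : rnorm r (seg x s) ≤ Real.exp (-(r * s)) * N := by
      rw [rnorm]
      refine csSup_le ⟨_, ⟨0, Set.self_mem_Iic, rfl⟩⟩ ?_
      rintro y ⟨θ, hθ, rfl⟩
      show Real.exp (r * θ) * ‖seg x s θ‖ ≤ Real.exp (-(r * s)) * N
      have hst : s + θ ≤ t := by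
        have : s + θ ≤ s := by linarith [Set.mem_Iic.mp hθ]
        exact this.trans hs.2
      have hexp : Real.exp (r * θ) = Real.exp (-(r * s)) * Real.exp (r * (s + θ)) := by
        rw [← Real.exp_add]; ring_nf
      have : Real.exp (r * θ) * ‖seg x s θ‖
          = Real.exp (-(r * s)) * F (s + θ) := by
        rw [hexp]; simp only [seg, hF]; ring
      rw [this]
      exact mul_le_mul_of_nonneg_left (hFleN _ hst) (Real.exp_pos _).le
    calc Real.exp (r * s) * rnorm r (seg x s)
        ≤ Real.exp (r * s) * (Real.exp (-(r * s)) * N) :=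
          mul_le_mul_of_nonneg_left hle (Real.exp_pos _).le
      _ = N := by rw [← mul_assoc, ← Real.exp_add]; simp
  have hhN : ∀ u ∈ Set.Icc (0 : ℝ) t, Real.exp (r * u) * ‖h u‖ ≤ κ * N := by
    intro u hu
    calc Real.exp (r * u) * ‖h u‖
        ≤ Real.exp (r * u) * (κ * rnorm r (seg x u)) :=
          mul_le_mul_of_nonneg_left (hh u hu) (Real.exp_pos _).le
      _ = κ * (Real.exp (r * u) * rnorm r (seg x u)) := by ring
      _ ≤ κ * N := mul_le_mul_of_nonneg_left (hrnorm u hu) hκ0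
  set G : ℝ → ℝ := fun s => Real.exp (2 * r * s) * ‖x s - h s‖ ^ 2 with hG
  set S := sSup (G '' Set.Ioc 0 t) with hSdef
  have hGsq : ∀ s, (Real.exp (r * s) * ‖x s - h s‖) ^ 2 = G s := by
    intro s
    have h2 : Real.exp (2 * r * s) = Real.exp (r * s) * Real.exp (r * s) := by
      rw [← Real.exp_add]; ring_nf
    simp only [hG]
    rw [h2]; ring
  have hSnn : 0 ≤ S := by
    apply Real.sSup_nonneg
    rintro y ⟨s, -, rfl⟩
    simp only [hG]
    positivity
  have hGbd : ∀ s ∈ Set.Ioc (0 : ℝ) t, Real.exp (r * s) * ‖x s - h s‖ ≤ N + κ * N := by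
    intro s hs
    have hs' : s ∈ Set.Icc (0 : ℝ) t := ⟨hs.1.le, hs.2⟩
    calc Real.exp (r * s) * ‖x s - h s‖
        ≤ Real.exp (r * s) * (‖x s‖ + ‖h s‖) :=
          mul_le_mul_of_nonneg_left (norm_sub_le _ _) (Real.exp_pos _).le
      _ = F s + Real.exp (r * s) * ‖h s‖ := by simp only [hF]; ring
      _ ≤ N + κ * N := add_le_add (hFleN s hs.2) (hhN s hs')
  have hBS : BddAbove (G '' Set.Ioc 0 t) := by
    refine ⟨(N + κ * N) ^ 2, ?_⟩
    rintro y ⟨s, hs, rfl⟩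
    rw [← hGsq s]
    exact pow_le_pow_left₀ (by positivity) (hGbd s hs) 2
  have hGleS : ∀ s ∈ Set.Ioc (0 : ℝ) t, G s ≤ S := fun s hs => le_csSup hBS ⟨s, hs, rfl⟩
  have young : ∀ a b : ℝ, (a + b) ^ 2 ≤ (1 + ε) * a ^ 2 + (1 + ε) / ε * b ^ 2 := by
    intro a b
    have key : ε * ((1 + ε) / ε * b ^ 2) = (1 + ε) * b ^ 2 := by field_simp
    have h1 : ε * (a + b) ^ 2 ≤ ε * ((1 + ε) * a ^ 2 + (1 + ε) / ε * b ^ 2) := by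
      rw [mul_add, key]
      nlinarith [sq_nonneg (ε * a - b), sq_nonneg a, hε.le]
    exact le_of_mul_le_mul_left h1 hε
  -- main pointwise estimate
  have hmain : ∀ u, u ≤ t →
      (F u) ^ 2 ≤ N0 ^ 2 + (1 + ε) * S + κ ^ 2 * (1 + ε) / ε * N ^ 2 := by
    intro u hu
    have hc1 : 0 ≤ (1 + ε) * S := mul_nonneg (by linarith) hSnn
    have hc2 : 0 ≤ κ ^ 2 * (1 + ε) / ε * N ^ 2 := mul_nonneg hγnn (sq_nonneg N)
    rcases le_or_gt u 0 with h0 | h0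
    · have h1 : F u ≤ N0 := le_csSup hB0 ⟨u, h0, rfl⟩
      have := pow_le_pow_left₀ (hFnn u) h1 2
      linarith
    · have hu' : u ∈ Set.Icc (0 : ℝ) t := ⟨h0.le, hu⟩
      have hnx : ‖x u‖ ≤ ‖x u - h u‖ + ‖h u‖ := by
        simpa [sub_add_cancel] using norm_add_le (x u - h u) (h u)
      have h1 : F u ≤ Real.exp (r * u) * ‖x u - h u‖ + κ * N := by
        calc F u = Real.exp (r * u) * ‖x u‖ := rfl
          _ ≤ Real.exp (r * u) * (‖x u - h u‖ + ‖h u‖) :=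
              mul_le_mul_of_nonneg_left hnx (Real.exp_pos _).le
          _ = Real.exp (r * u) * ‖x u - h u‖ + Real.exp (r * u) * ‖h u‖ := by ring
          _ ≤ Real.exp (r * u) * ‖x u - h u‖ + κ * N :=
              add_le_add_right (hhN u hu') _
      have h2 : (F u) ^ 2 ≤ (Real.exp (r * u) * ‖x u - h u‖ + κ * N) ^ 2 :=
        pow_le_pow_left₀ (hFnn u) h1 2
      have h3 := young (Real.exp (r * u) * ‖x u - h u‖) (κ * N)
      have h4 : (Real.exp (r * u) * ‖x u - h u‖) ^ 2 ≤ S := by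
        rw [hGsq u]; exact hGleS u ⟨h0, hu⟩
      have h5 : (1 + ε) * (Real.exp (r * u) * ‖x u - h u‖) ^ 2 ≤ (1 + ε) * S :=
        mul_le_mul_of_nonneg_left h4 (by linarith)
      have h6 : (1 + ε) / ε * (κ * N) ^ 2 = κ ^ 2 * (1 + ε) / ε * N ^ 2 := by
        field_simp
      nlinarith [sq_nonneg N0]
  -- N² bound
  have hRHSnn : 0 ≤ N0 ^ 2 + (1 + ε) * S + κ ^ 2 * (1 + ε) / ε * N ^ 2 := by
    have h1 : 0 ≤ (1 + ε) * S := mul_nonneg (by linarith) hSnn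
    have h2 : 0 ≤ κ ^ 2 * (1 + ε) / ε * N ^ 2 := mul_nonneg hγnn (sq_nonneg N)
    nlinarith [sq_nonneg N0]
  have hNle : N ≤ Real.sqrt (N0 ^ 2 + (1 + ε) * S + κ ^ 2 * (1 + ε) / ε * N ^ 2) := by
    refine csSup_le ⟨F t, t, Set.self_mem_Iic, rfl⟩ ?_
    rintro y ⟨u, hu, rfl⟩
    exact (Real.le_sqrt (hFnn u) hRHSnn).mpr (hmain u hu)
  have hN2 : N ^ 2 ≤ N0 ^ 2 + (1 + ε) * S + κ ^ 2 * (1 + ε) / ε * N ^ 2 := by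
    calc N ^ 2 ≤ Real.sqrt (N0 ^ 2 + (1 + ε) * S + κ ^ 2 * (1 + ε) / ε * N ^ 2) ^ 2 :=
          pow_le_pow_left₀ hNnn hNle 2
      _ = _ := Real.sq_sqrt hRHSnn
  have hLHS : Real.exp (2 * r * t) * (rnorm r (seg x t)) ^ 2 ≤ N ^ 2 := by
    have h1 : Real.exp (r * t) * rnorm r (seg x t) ≤ N := hrnorm t ⟨ht, le_rfl⟩
    have h2 : 0 ≤ Real.exp (r * t) * rnorm r (seg x t) :=
      mul_nonneg (Real.exp_pos _).le (hrnnn t)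
    have h3 : Real.exp (2 * r * t) * (rnorm r (seg x t)) ^ 2
        = (Real.exp (r * t) * rnorm r (seg x t)) ^ 2 := by
      have h4 : Real.exp (2 * r * t) = Real.exp (r * t) * Real.exp (r * t) := by
        rw [← Real.exp_add]; ring_nf
      rw [h4]; ring
    rw [h3]
    exact pow_le_pow_left₀ h2 h1 2
  rw [hr0]
  have hfin : Real.exp (2 * r * t) * (rnorm r (seg x t)) ^ 2
      ≤ (N0 ^ 2 + (1 + ε) * S) / (1 - κ ^ 2 * (1 + ε) / ε) := by
    rw [le_div_iff₀ hγpos]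
    have e1 : Real.exp (2 * r * t) * (rnorm r (seg x t)) ^ 2 * (1 - κ ^ 2 * (1 + ε) / ε)
        ≤ N ^ 2 * (1 - κ ^ 2 * (1 + ε) / ε) :=
      mul_le_mul_of_nonneg_right hLHS hγpos.le
    have e2 : N ^ 2 * (1 - κ ^ 2 * (1 + ε) / ε) ≤ N0 ^ 2 + (1 + ε) * S := by
      linarith only [hN2]
    exact e1.trans e2
  calc Real.exp (2 * r * t) * (rnorm r (seg x t)) ^ 2
      ≤ (N0 ^ 2 + (1 + ε) * S) / (1 - κ ^ 2 * (1 + ε) / ε) := hfin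
    _ = 1 / (1 - κ ^ 2 * (1 + ε) / ε) * N0 ^ 2
        + (1 + ε) / (1 - κ ^ 2 * (1 + ε) / ε) * S := by ring
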